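/- arXiv:1210.6853 — 4 statements merged into one kernel-verified Lean document; each statement's English description precedes it below -/
import Mathlib

section
/- Let m ≥ 2 and k be integers with 1 ≤ k ≤ m/2. Set q = min(1, ln(k)/ln(m/k)) if k > 1 and q = 1/(2 ln m) if k = 1; set β = 1 if k ≥ √m, β = q/2 if 1 < k < √m, and β = q/(2√e) if k = 1. Let X = {x ∈ ℝ^m : 0 ≤ x_j ≤ 1 for all j, Σ_{j=1}^m x_j = k} and ω(x) = (4/(β(1+q)))·Σ_{j=1}^m x_j^{1+q}. Then ω is continuous and convex on X, and it is strongly convex with modulus 1 on X with respect to the norm on {x ∈ ℝ^m : Σ_j x_j = 0} whose unit ball is ½[X−X] := {(u−v)/2 : u, v ∈ X}. -/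
open Pointwise

lemma aux_scalar {q c a b t : ℝ} (hq0 : 0 < q) (hq1 : q ≤ 1) (hc : 0 < c)
    (ha : 0 ≤ a) (hac : a ≤ c) (hb : 0 ≤ b) (hbc : b ≤ c)
    (ht0 : 0 ≤ t) (ht1 : t ≤ 1) :
    q*(1+q)/2 * c^(q-1) * (t*(1-t)*(a-b)^2) + (t*a+(1-t)*b)^(1+q)
      ≤ t * a^(1+q) + (1-t) * b^(1+q) := by
  set K := q*(1+q)/2 * c^(q-1) with hK
  have hrpow_cont : Continuous fun s : ℝ => s ^ (1+q) :=
    continuous_iff_continuousAt.2 fun x => Real.continuousAt_rpow_const x _ (Or.inr (by linarith))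
  set ψ : ℝ → ℝ := fun s => s ^ (1+q) - K * s^2 with hψ
  have hd1 : ∀ x ∈ Set.Ioo (0:ℝ) c, HasDerivAt ψ ((1+q) * x ^ q - K * (2*x)) x := by
    intro x hx
    have h1 : HasDerivAt (fun s : ℝ => s ^ (1+q)) ((1+q) * x ^ ((1+q)-1)) x :=
      Real.hasDerivAt_rpow_const (Or.inl (ne_of_gt hx.1))
    have h2 : HasDerivAt (fun s : ℝ => K * s^2) (K * (2*x)) x := by
      simpa using (hasDerivAt_pow 2 x).const_mul K
    have h3 := h1.sub h2
    rw [show (1+q)-1 = q by ring] at h3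
    exact h3
  have hderiv_eq : ∀ x ∈ Set.Ioo (0:ℝ) c, deriv ψ x = (1+q) * x ^ q - K * (2*x) :=
    fun x hx => (hd1 x hx).deriv
  have hd2 : ∀ x ∈ Set.Ioo (0:ℝ) c,
      HasDerivAt (fun s : ℝ => (1+q) * s ^ q - K * (2*s)) ((1+q) * (q * x ^ (q-1)) - K * 2) x := by
    intro x hx
    have h1 : HasDerivAt (fun s:ℝ => s ^ q) (q * x ^ (q-1)) x :=
      Real.hasDerivAt_rpow_const (Or.inl (ne_of_gt hx.1))
    have h2 : HasDerivAt (fun s:ℝ => K*(2*s)) (K*2) x := by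
      simpa [mul_assoc] using (hasDerivAt_id x).const_mul (K*2)
    exact (h1.const_mul (1+q)).sub h2
  have hconv : ConvexOn ℝ (Set.Icc 0 c) ψ := by
    apply convexOn_of_deriv2_nonneg (convex_Icc 0 c)
    · exact (hrpow_cont.sub (continuous_const.mul (continuous_pow 2))).continuousOn
    · rw [interior_Icc]
      exact fun x hx => ((hd1 x hx).differentiableAt).differentiableWithinAt
    · rw [interior_Icc]
      apply DifferentiableOn.congr (f := fun s : ℝ => (1+q)*s^q - K*(2*s))
      · exact fun x hx => ((hd2 x hx).differentiableAt).differentiableWithinAt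
      · exact fun x hx => hderiv_eq x hx
    · rw [interior_Icc]; intro x hx
      have hev : deriv ψ =ᶠ[nhds x] fun s : ℝ => (1+q)*s^q - K*(2*s) :=
        Filter.eventuallyEq_of_mem (Ioo_mem_nhds hx.1 hx.2) hderiv_eq
      have h2 : deriv (deriv ψ) x = (1+q)*(q*x^(q-1)) - K*2 := by
        rw [hev.deriv_eq]; exact (hd2 x hx).deriv
      have h3 : deriv^[2] ψ x = deriv (deriv ψ) x := by
        simp [Function.iterate_succ, Function.iterate_zero]
      rw [h3, h2]
      have h4 : c^(q-1) ≤ x^(q-1) :=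
        Real.rpow_le_rpow_of_nonpos hx.1 hx.2.le (by linarith)
      have h5 : K*2 = q*(1+q)*c^(q-1) := by rw [hK]; ring
      have h6 := mul_le_mul_of_nonneg_left h4 (by positivity : (0:ℝ) ≤ q*(1+q))
      linarith [h5, h6]
  have hmem1 : a ∈ Set.Icc (0:ℝ) c := ⟨ha, hac⟩
  have hmem2 : b ∈ Set.Icc (0:ℝ) c := ⟨hb, hbc⟩
  have h := hconv.2 hmem1 hmem2 ht0 (by linarith : (0:ℝ) ≤ 1 - t) (by ring)
  simp only [smul_eq_mul, hψ] at h
  nlinarith [h]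


lemma aux_jensen {m : ℕ} (hm : 0 < m) {p : ℝ} (hp0 : 0 ≤ p) (hp1 : p ≤ 1)
    (c : Fin m → ℝ) (hc : ∀ j, 0 ≤ c j) :
    ∑ j, (c j) ^ p ≤ (m:ℝ)^(1-p) * (∑ j, c j)^p := by
  have hm0 : (0:ℝ) < m := by exact_mod_cast hm
  have hmne : (m:ℝ) ≠ 0 := ne_of_gt hm0
  have h := (Real.concaveOn_rpow hp0 hp1).le_map_sum (t := Finset.univ)
      (w := fun _ : Fin m => (m:ℝ)⁻¹) (p := fun j => (m:ℝ) * c j)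
      (fun _ _ => by positivity)
      (by simp [Finset.card_univ]; field_simp)
      (fun j _ => by have := hc j; exact Set.mem_Ici.2 (by positivity))
  simp only [smul_eq_mul] at h
  have hL : ∀ j ∈ Finset.univ, (m:ℝ)⁻¹ * (((m:ℝ) * c j) ^ p) = ((m:ℝ)⁻¹ * (m:ℝ)^p) * (c j)^p := by
    intro j _; rw [Real.mul_rpow hm0.le (hc j)]; ring
  rw [Finset.sum_congr rfl hL, ← Finset.mul_sum] at h
  have hR : ∑ j, (m:ℝ)⁻¹ * ((m:ℝ) * c j) = ∑ j, c j := by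
    apply Finset.sum_congr rfl; intro j _; field_simp
  rw [hR] at h
  -- h : m⁻¹ * m^p * Σ c^p ≤ (Σ c)^p
  have hmp : (0:ℝ) < (m:ℝ)^p := Real.rpow_pos_of_pos hm0 _
  rw [Real.rpow_sub hm0, Real.rpow_one, div_mul_eq_mul_div, le_div_iff₀ hmp]
  calc (∑ j, (c j)^p) * (m:ℝ)^p = (m:ℝ) * ((m:ℝ)⁻¹ * (m:ℝ)^p * ∑ j, (c j)^p) := by
        field_simp
    _ ≤ (m:ℝ) * (∑ j, c j)^p := by
        exact mul_le_mul_of_nonneg_left h hm0.le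


lemma aux_gauge (m k : ℕ) (hm : 2 ≤ m) (hk1 : 1 ≤ k) (hk2 : 2 * k ≤ m)
    (X : Set (Fin m → ℝ))
    (hX : X = {x : Fin m → ℝ | (∀ j, 0 ≤ x j ∧ x j ≤ 1) ∧ ∑ j, x j = (k : ℝ)})
    {u v : Fin m → ℝ} (hu : u ∈ X) (hv : v ∈ X)
    {r : ℝ} (hr : 0 < r) (hM : ∀ j, |u j - v j| ≤ r / 2)
    (hL : ∑ j, |u j - v j| ≤ k * r) :
    gauge ((2⁻¹ : ℝ) • (X - X)) (u - v) ≤ r := by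
  rw [hX] at hu hv
  have hk1' : (1:ℝ) ≤ (k:ℝ) := by exact_mod_cast hk1
  have hmk' : 2*(k:ℝ) ≤ (m:ℝ) := by exact_mod_cast hk2
  have hk0 : (0:ℝ) < k := by linarith
  have habs_nonneg : (0:ℝ) ≤ ∑ j, |u j - v j| := Finset.sum_nonneg fun j _ => abs_nonneg _
  set s : ℝ := (∑ j, |u j - v j|) / r with hs
  have hs0 : 0 ≤ s := div_nonneg habs_nonneg hr.le
  have hsk : s ≤ k := by rw [hs, div_le_iff₀ hr]; linarith
  have hden : 0 ≤ (m:ℝ) - 2*s := by linarith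
  set lam : ℝ := ((k:ℝ) - s) / ((m:ℝ) - 2*s) with hlam
  have hseq : ((m:ℝ) - 2*s = 0) → s = k := by intro h0; nlinarith
  have hlam0 : 0 ≤ lam := div_nonneg (by linarith) hden
  have hlam1 : lam ≤ 1 := by
    rcases eq_or_lt_of_le hden with h0 | h0
    · rw [hlam, ← h0, div_zero]; norm_num
    · rw [hlam, div_le_one h0]; linarith
  have hlam_sum : lam * ((m:ℝ) - 2*s) = (k:ℝ) - s := by
    rcases eq_or_lt_of_le hden with h0 | h0
    · rw [← h0, mul_zero]; have := hseq h0.symm; linarith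
    · rw [hlam]; exact div_mul_cancel₀ _ h0.ne'
  set w : Fin m → ℝ := fun j => lam * (1 - 2*|u j - v j|/r) with hw
  have hw_nonneg : ∀ j, 0 ≤ w j := by
    intro j
    have h1 : 2*|u j - v j|/r ≤ 1 := by
      rw [div_le_one hr]; have := hM j; linarith
    exact mul_nonneg hlam0 (by linarith)
  have hw_le : ∀ j, w j ≤ 1 - 2*|u j - v j|/r := by
    intro j
    have h1 : 2*|u j - v j|/r ≤ 1 := by
      rw [div_le_one hr]; have := hM j; linarith
    calc w j ≤ 1 * (1 - 2*|u j - v j|/r) := by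
          apply mul_le_mul_of_nonneg_right hlam1 (by linarith)
      _ = 1 - 2*|u j - v j|/r := one_mul _
  have hsum_d : ∑ j, (u j - v j) = 0 := by
    rw [Finset.sum_sub_distrib, hu.2, hv.2, sub_self]
  have hsum_abs : ∑ j, |u j - v j| = s * r := by rw [hs]; field_simp
  have hsum_w : ∑ j, w j = (k:ℝ) - s := by
    rw [hw]
    rw [← Finset.mul_sum]
    have : ∑ j : Fin m, (1 - 2*|u j - v j|/r) = (m:ℝ) - 2*s := by
      rw [Finset.sum_sub_distrib]
      simp only [Finset.sum_const, Finset.card_univ, Fintype.card_fin, nsmul_eq_mul, mul_one]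
      have : ∑ j : Fin m, 2*|u j - v j|/r = 2*s := by
        rw [← Finset.sum_div, ← Finset.mul_sum, hsum_abs]; field_simp
      rw [this]
    rw [this, hlam_sum]
  set u' : Fin m → ℝ := fun j => max (2*(u j - v j)/r) 0 + w j with hu'def
  set v' : Fin m → ℝ := fun j => max (-(2*(u j - v j)/r)) 0 + w j with hv'def
  have hmaxpos : ∀ a : ℝ, max a 0 = (a + |a|)/2 := by
    intro a; rcases le_total 0 a with h | h
    · rw [max_eq_left h, abs_of_nonneg h]; ring
    · rw [max_eq_right h, abs_of_nonpos h]; ring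
  have hmaxneg : ∀ a : ℝ, max (-a) 0 = (|a| - a)/2 := by
    intro a; rcases le_total 0 a with h | h
    · rw [max_eq_right (by linarith : -a ≤ 0), abs_of_nonneg h]; ring
    · rw [max_eq_left (by linarith : 0 ≤ -a), abs_of_nonpos h]; ring
  have habs2 : ∀ j, |2*(u j - v j)/r| = 2*|u j - v j|/r := by
    intro j
    rw [abs_div, abs_of_pos hr, abs_mul]
    norm_num
  have hsum_pos : ∑ j, max (2*(u j - v j)/r) 0 = s := by
    have : ∀ j ∈ Finset.univ, max (2*(u j - v j)/r) 0
        = (2*(u j - v j)/r + 2*|u j - v j|/r)/2 := by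
      intro j _; rw [hmaxpos, habs2]
    rw [Finset.sum_congr rfl this]
    rw [← Finset.sum_div, Finset.sum_add_distrib]
    have h1 : ∑ j : Fin m, 2*(u j - v j)/r = 0 := by
      rw [← Finset.sum_div, ← Finset.mul_sum, hsum_d]; simp
    have h2 : ∑ j : Fin m, 2*|u j - v j|/r = 2*s := by
      rw [← Finset.sum_div, ← Finset.mul_sum, hsum_abs]; field_simp
    rw [h1, h2]; ring
  have hsum_neg : ∑ j, max (-(2*(u j - v j)/r)) 0 = s := by
    have : ∀ j ∈ Finset.univ, max (-(2*(u j - v j)/r)) 0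
        = (2*|u j - v j|/r - 2*(u j - v j)/r)/2 := by
      intro j _; rw [hmaxneg, habs2]
    rw [Finset.sum_congr rfl this]
    rw [← Finset.sum_div, Finset.sum_sub_distrib]
    have h1 : ∑ j : Fin m, 2*(u j - v j)/r = 0 := by
      rw [← Finset.sum_div, ← Finset.mul_sum, hsum_d]; simp
    have h2 : ∑ j : Fin m, 2*|u j - v j|/r = 2*s := by
      rw [← Finset.sum_div, ← Finset.mul_sum, hsum_abs]; field_simp
    rw [h1, h2]; ring
  have hu'X : u' ∈ X := by
    rw [hX]
    refine ⟨fun j => ⟨?_, ?_⟩, ?_⟩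
    · exact add_nonneg (le_max_right _ _) (hw_nonneg j)
    · simp only [hu'def]
      have h1 : max (2*(u j - v j)/r) 0 ≤ 2*|u j - v j|/r := by
        apply max_le
        · rw [div_le_div_iff₀ hr hr]
          have := le_abs_self (u j - v j); nlinarith
        · positivity
      have := hw_le j; linarith
    · rw [hu'def, Finset.sum_add_distrib, hsum_pos, hsum_w]; ring
  have hv'X : v' ∈ X := by
    rw [hX]
    refine ⟨fun j => ⟨?_, ?_⟩, ?_⟩
    · exact add_nonneg (le_max_right _ _) (hw_nonneg j)
    · simp only [hv'def]
      have h1 : max (-(2*(u j - v j)/r)) 0 ≤ 2*|u j - v j|/r := by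
        apply max_le
        · rw [neg_le, ← neg_div, ← neg_mul]
          rw [div_le_div_iff₀ hr hr]
          have := neg_abs_le (u j - v j); nlinarith
        · positivity
      have := hw_le j; linarith
    · rw [hv'def, Finset.sum_add_distrib, hsum_neg, hsum_w]; ring
  have hdiff : ∀ j, u' j - v' j = 2*(u j - v j)/r := by
    intro j
    rw [hu'def, hv'def]
    simp only []
    rw [hmaxpos, hmaxneg]
    ring
  have h1 : u' - v' ∈ X - X := Set.sub_mem_sub hu'X hv'X
  have h2 : (2⁻¹:ℝ) • (u' - v') ∈ (2⁻¹:ℝ) • (X - X) := Set.smul_mem_smul_set h1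
  have h3 : u - v = r • ((2⁻¹:ℝ) • (u' - v')) := by
    funext j
    simp only [Pi.smul_apply, Pi.sub_apply, smul_eq_mul]
    rw [hdiff j]
    field_simp
  have h4 : u - v ∈ r • ((2⁻¹:ℝ) • (X - X)) := by
    rw [h3]; exact Set.smul_mem_smul_set h2
  exact gauge_le_of_mem hr.le h4


lemma aux_arith (m k : ℕ) (hm : 2 ≤ m) (hk1 : 1 ≤ k) (hk2 : 2 * k ≤ m)
    (q β : ℝ)
    (hq : q = if 1 < k then min 1 (Real.log k / Real.log ((m : ℝ) / k)) else 1 / (2 * Real.log m))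
    (hβ : β = if Real.sqrt m ≤ (k : ℝ) then 1
      else if 1 < k then q / 2 else q / (2 * Real.sqrt (Real.exp 1))) :
    0 < q ∧ q ≤ 1 ∧ 0 < β ∧ β ≤ q ∧ β * (m:ℝ)^q ≤ 2*q*(k:ℝ)^(1+q) := by
  have hk1' : (1:ℝ) ≤ (k:ℝ) := by exact_mod_cast hk1
  have hm2' : (2:ℝ) ≤ (m:ℝ) := by exact_mod_cast hm
  have hmk' : 2*(k:ℝ) ≤ (m:ℝ) := by exact_mod_cast hk2
  have hk0 : (0:ℝ) < k := by linarith
  have hm0 : (0:ℝ) < m := by linarith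
  have hm1 : (1:ℝ) < m := by linarith
  have hmk1 : 1 < k → (1:ℝ) < (m:ℝ)/k := by
    intro h
    have hk1lt : (1:ℝ) < k := by exact_mod_cast h
    rw [lt_div_iff₀ hk0]; linarith
  have hq0 : 0 < q := by
    rw [hq]; split_ifs with h
    · have hk1lt : (1:ℝ) < k := by exact_mod_cast h
      exact lt_min one_pos (div_pos (Real.log_pos hk1lt) (Real.log_pos (hmk1 h)))
    · have := Real.log_pos hm1
      positivity
  have hq1 : q ≤ 1 := by
    rw [hq]; split_ifs with h
    · exact min_le_left _ _
    · have hl2 : (0.6931471803:ℝ) < Real.log 2 := Real.log_two_gt_d9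
      have hlm : Real.log 2 ≤ Real.log m := Real.log_le_log (by norm_num) hm2'
      rw [div_le_one (by linarith)]; linarith
  -- case √m ≤ k
  have hcase1 : Real.sqrt m ≤ (k:ℝ) → ((m:ℝ) ≤ (k:ℝ)^2 ∧ q = 1) := by
    intro h1
    have hsq := Real.sq_sqrt hm0.le
    have hmk2 : (m:ℝ) ≤ (k:ℝ)^2 := by nlinarith [Real.sqrt_nonneg (m:ℝ)]
    have hklt : 1 < k := by
      by_contra hcon
      have hkeq : k = 1 := by omega
      rw [hkeq] at hmk2; norm_num at hmk2; linarith
    refine ⟨hmk2, ?_⟩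
    rw [hq, if_pos hklt]
    apply min_eq_left
    have hlpos : 0 < Real.log ((m:ℝ)/k) := Real.log_pos (hmk1 hklt)
    rw [le_div_iff₀ hlpos, one_mul]
    apply Real.log_le_log (by positivity)
    rw [div_le_iff₀ hk0]; nlinarith
  have hβ0 : 0 < β := by
    rw [hβ]; split_ifs with h1 h2
    · norm_num
    · linarith
    · have : (0:ℝ) < Real.sqrt (Real.exp 1) := Real.sqrt_pos.2 (Real.exp_pos 1)
      positivity
  have hβq : β ≤ q := by
    rw [hβ]; split_ifs with h1 h2
    · exact le_of_eq (hcase1 h1).2.symm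
    · linarith
    · have h3 : (1:ℝ) ≤ Real.sqrt (Real.exp 1) := by
        nlinarith [Real.sq_sqrt (Real.exp_pos 1).le, Real.sqrt_nonneg (Real.exp 1),
          Real.add_one_le_exp (1:ℝ)]
      calc q / (2*Real.sqrt (Real.exp 1)) ≤ q / 2 := by
            apply div_le_div_of_nonneg_left hq0.le (by norm_num) (by linarith)
        _ ≤ q := by linarith
  have hkey : β * (m:ℝ)^q ≤ 2*q*(k:ℝ)^(1+q) := by
    rw [hβ]; split_ifs with h1 h2
    · obtain ⟨hmk2, hqe⟩ := hcase1 h1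
      rw [hqe]
      rw [Real.rpow_one, show (1:ℝ)+1 = ((2:ℕ):ℝ) by norm_num, Real.rpow_natCast]
      nlinarith
    · -- 1 < k, k < √m
      have hklt : (1:ℝ) < k := by exact_mod_cast h2
      have hkm : (k:ℝ) < Real.sqrt m := not_le.1 h1
      have hk2m : (k:ℝ)^2 < m := by nlinarith [Real.sq_sqrt hm0.le, Real.sqrt_nonneg (m:ℝ)]
      have hmdk1 : (1:ℝ) < (m:ℝ)/k := hmk1 h2
      have hlpos : 0 < Real.log ((m:ℝ)/k) := Real.log_pos hmdk1
      have hqe : q = Real.log k / Real.log ((m:ℝ)/k) := by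
        rw [hq, if_pos h2]
        apply min_eq_right
        rw [div_le_one hlpos]
        apply Real.log_le_log hk0
        rw [le_div_iff₀ hk0]; nlinarith
      have hmq : (m:ℝ)^q = (k:ℝ)^(1+q) := by
        have e1 : (m:ℝ) = ((m:ℝ)/k) * k := by field_simp
        rw [e1, Real.mul_rpow (by positivity) hk0.le]
        have e2 : ((m:ℝ)/k)^q = k := by
          rw [Real.rpow_def_of_pos (by positivity), hqe, mul_comm,
            div_mul_cancel₀ _ (ne_of_gt hlpos), Real.exp_log hk0]
        rw [e2, Real.rpow_add hk0, Real.rpow_one, mul_comm]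
      rw [hmq]
      have := Real.rpow_nonneg hk0.le (1+q)
      nlinarith
    · -- k = 1
      have hkeq : k = 1 := by omega
      have hlm0 : 0 < Real.log m := Real.log_pos hm1
      have hqe : q = 1/(2*Real.log m) := by rw [hq, if_neg h2]
      have hmq : (m:ℝ)^q = Real.exp (1/2) := by
        rw [Real.rpow_def_of_pos hm0, hqe]
        congr 1
        field_simp
      have hE : Real.sqrt (Real.exp 1) = Real.exp (1/2) := by
        rw [show Real.exp 1 = Real.exp (1/2) ^ 2 by rw [sq, ← Real.exp_add]; norm_num]
        exact Real.sqrt_sq (Real.exp_pos _).le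
      rw [hkeq, hmq, hE]
      push_cast
      rw [Real.one_rpow]
      have hE0 : 0 < Real.exp (1/2) := Real.exp_pos _
      rw [div_mul_eq_mul_div, div_le_iff₀ (by positivity)]
      have h9 := mul_pos hq0 hE0
      linarith
  exact ⟨hq0, hq1, hβ0, hβq, hkey⟩


set_option maxHeartbeats 1000000 in
/-- For `m ≥ 2`, `1 ≤ k ≤ m/2`, with `q`, `β` as specified,
`X = {x ∈ ℝ^m : 0 ≤ x_j ≤ 1, Σ_j x_j = k}` and `ω(x) = (4/(β(1+q)))·Σ_j x_j^{1+q}`,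
the function `ω` is continuous and convex on `X` and strongly convex with modulus 1 on `X`
w.r.t. the norm whose unit ball is `½[X−X]` (its gauge). -/
theorem stmt_12 (m k : ℕ) (hm : 2 ≤ m) (hk1 : 1 ≤ k) (hk2 : 2 * k ≤ m)
    (q β : ℝ)
    (hq : q = if 1 < k then min 1 (Real.log k / Real.log ((m : ℝ) / k)) else 1 / (2 * Real.log m))
    (hβ : β = if Real.sqrt m ≤ (k : ℝ) then 1
      else if 1 < k then q / 2 else q / (2 * Real.sqrt (Real.exp 1)))
    (X : Set (Fin m → ℝ))
    (hX : X = {x | (∀ j, 0 ≤ x j ∧ x j ≤ 1) ∧ ∑ j, x j = (k : ℝ)})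
    (ω : (Fin m → ℝ) → ℝ)
    (hω : ω = fun x => (4 / (β * (1 + q))) * ∑ j, x j ^ (1 + q))
    (Nrm : (Fin m → ℝ) → ℝ)
    (hNrm : Nrm = gauge ((2⁻¹ : ℝ) • (X - X))) :
    ContinuousOn ω X ∧ ConvexOn ℝ X ω ∧
    ∀ u ∈ X, ∀ v ∈ X, ∀ t ∈ Set.Icc (0 : ℝ) 1,
      ω (t • u + (1 - t) • v) ≤
        t * ω u + (1 - t) * ω v - (1 / 2) * t * (1 - t) * Nrm (u - v) ^ 2 := by
  obtain ⟨hq0, hq1, hβ0, hβq, hkey⟩ := aux_arith m k hm hk1 hk2 q β hq hβ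
  have hk1' : (1:ℝ) ≤ (k:ℝ) := by exact_mod_cast hk1
  have hm2' : (2:ℝ) ≤ (m:ℝ) := by exact_mod_cast hm
  have hmk' : 2*(k:ℝ) ≤ (m:ℝ) := by exact_mod_cast hk2
  have hk0 : (0:ℝ) < k := by linarith
  have hm0 : (0:ℝ) < m := by linarith
  have h1q0 : (0:ℝ) < 1 + q := by linarith
  have hC0 : (0:ℝ) < 4 / (β * (1 + q)) := div_pos (by norm_num) (mul_pos hβ0 h1q0)
  have hβne : β ≠ 0 := ne_of_gt hβ0
  have h1qne : (1:ℝ) + q ≠ 0 := ne_of_gt h1q0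
  have hkne : (k:ℝ) ≠ 0 := ne_of_gt hk0
  -- the strong convexity statement
  have key3 : ∀ u ∈ X, ∀ v ∈ X, ∀ t ∈ Set.Icc (0 : ℝ) 1,
      ω (t • u + (1 - t) • v) ≤
        t * ω u + (1 - t) * ω v - (1 / 2) * t * (1 - t) * Nrm (u - v) ^ 2 := by
    intro u hu v hv t ht
    obtain ⟨ht0, ht1⟩ := ht
    have ht01 : (0:ℝ) ≤ t * (1 - t) := mul_nonneg ht0 (by linarith)
    have huX := hu; have hvX := hv
    rw [hX] at huX hvX
    set C : ℝ := 4 / (β * (1 + q)) with hC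
    set L : ℝ := ∑ j, |u j - v j| with hLdef
    have hL0 : 0 ≤ L := Finset.sum_nonneg fun j _ => abs_nonneg _
    -- per-coordinate inequalities
    have aux1 : ∀ j, q*(1+q)/2 * (t*(1-t)*(u j - v j)^2) + (t*(u j)+(1-t)*(v j))^(1+q)
        ≤ t * (u j)^(1+q) + (1-t) * (v j)^(1+q) := by
      intro j
      have h := aux_scalar hq0 hq1 one_pos (huX.1 j).1 (huX.1 j).2 (hvX.1 j).1 (hvX.1 j).2 ht0 ht1
      rw [Real.one_rpow, mul_one] at h
      exact h
    have hD_nonneg : ∀ j, 0 ≤ t * (u j)^(1+q) + (1-t) * (v j)^(1+q)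
        - (t*(u j)+(1-t)*(v j))^(1+q) := by
      intro j
      have h := aux1 j
      have h2 : 0 ≤ q*(1+q)/2 * (t*(1-t)*(u j - v j)^2) := by
        apply mul_nonneg (by positivity)
        exact mul_nonneg ht01 (sq_nonneg _)
      linarith
    set Dsum : ℝ := ∑ j, (t * (u j)^(1+q) + (1-t) * (v j)^(1+q)
        - (t*(u j)+(1-t)*(v j))^(1+q)) with hDsumdef
    have hDsum0 : 0 ≤ Dsum := Finset.sum_nonneg fun j _ => hD_nonneg j
    have key : (1/2)*t*(1-t) * (Nrm (u - v))^2 ≤ C * Dsum := by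
      rcases eq_or_lt_of_le hL0 with hLz | hLpos
      · -- u = v
        have huv : u - v = 0 := by
          funext j
          have h0 := (Finset.sum_eq_zero_iff_of_nonneg
            (fun j (_ : j ∈ Finset.univ) => abs_nonneg (u j - v j))).1 hLz.symm j (Finset.mem_univ j)
          simp only [Pi.sub_apply, Pi.zero_apply]
          exact abs_eq_zero.1 h0
        rw [huv, hNrm, gauge_zero]
        have : (0:ℝ) ≤ C * Dsum := mul_nonneg hC0.le hDsum0
        nlinarith
      · -- L > 0
        have hne : (Finset.univ : Finset (Fin m)).Nonempty := ⟨⟨0, by omega⟩, Finset.mem_univ _⟩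
        obtain ⟨j0, -, hj0⟩ := Finset.exists_max_image Finset.univ (fun j => |u j - v j|) hne
        have hM0 : 0 < |u j0 - v j0| := by
          by_contra hcon
          push_neg at hcon
          have : L ≤ 0 := Finset.sum_nonpos fun j _ => le_trans (hj0 j (Finset.mem_univ j)) hcon
          linarith
        set r : ℝ := max (2*|u j0 - v j0|) (L/(k:ℝ)) with hrdef
        have hr0 : 0 < r := lt_of_lt_of_le (by linarith) (le_max_left _ _)
        have hgauge : gauge ((2⁻¹:ℝ) • (X - X)) (u - v) ≤ r := by
          apply aux_gauge m k hm hk1 hk2 X hX hu hv hr0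
          · intro j
            have h1 := hj0 j (Finset.mem_univ j)
            have h2 : 2*|u j0 - v j0| ≤ r := le_max_left _ _
            linarith
          · have h3 : L/(k:ℝ) ≤ r := le_max_right _ _
            have h4 : L = (k:ℝ) * (L/(k:ℝ)) := by field_simp
            rw [← hLdef, h4]
            exact mul_le_mul_of_nonneg_left h3 hk0.le
        have hg2 : (Nrm (u - v))^2 ≤ r^2 := by
          rw [hNrm]
          exact pow_le_pow_left₀ (gauge_nonneg _) hgauge 2
        have hle := mul_le_mul_of_nonneg_left hg2
          (show (0:ℝ) ≤ 1/2*t*(1-t) by nlinarith)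
        -- bound via the sup-norm part
        have hqβ2 : (2:ℝ) ≤ 2*q/β := by rw [le_div_iff₀ hβ0]; linarith
        have hsq0 : 0 ≤ t*(1-t)*(u j0 - v j0)^2 := mul_nonneg ht01 (sq_nonneg _)
        have hmain1 : (1/2)*t*(1-t)*(2*|u j0 - v j0|)^2 ≤ C * Dsum := by
          have h1 : q*(1+q)/2*(t*(1-t)*(u j0 - v j0)^2) ≤ t * (u j0)^(1+q)
              + (1-t) * (v j0)^(1+q) - (t*(u j0)+(1-t)*(v j0))^(1+q) := by
            have := aux1 j0; linarith
          have h2 : t * (u j0)^(1+q) + (1-t) * (v j0)^(1+q)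
              - (t*(u j0)+(1-t)*(v j0))^(1+q) ≤ Dsum :=
            Finset.single_le_sum (fun j _ => hD_nonneg j) (Finset.mem_univ j0)
          have h4 := mul_le_mul_of_nonneg_left (h1.trans h2) hC0.le
          have h7 := mul_le_mul_of_nonneg_right hqβ2 hsq0
          have h8 : C * (q*(1+q)/2*(t*(1-t)*(u j0 - v j0)^2))
              = (2*q/β)*(t*(1-t)*(u j0-v j0)^2) := by
            rw [hC]; field_simp; ring
          have h10 : (1/2)*t*(1-t)*(2*|u j0 - v j0|)^2 = 2*(t*(1-t)*(u j0 - v j0)^2) := by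
            rw [mul_pow, sq_abs]; ring
          rw [h10]
          linarith
        -- bound via the ℓ1-norm part
        have hmain2 : (1/2)*t*(1-t)*(L/(k:ℝ))^2 ≤ C * Dsum := by
          set T : ℝ := ∑ j, (u j + v j)^(q-1) * (u j - v j)^2 with hTdef
          have hT0 : 0 ≤ T := Finset.sum_nonneg fun j _ =>
            mul_nonneg (Real.rpow_nonneg (add_nonneg (huX.1 j).1 (hvX.1 j).1) _) (sq_nonneg _)
          have aux2 : ∀ j, (q*(1+q)/2)*((u j + v j)^(q-1)*(t*(1-t)*(u j - v j)^2))
              ≤ t * (u j)^(1+q) + (1-t) * (v j)^(1+q) - (t*(u j)+(1-t)*(v j))^(1+q) := by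
            intro j
            rcases eq_or_lt_of_le (add_nonneg (huX.1 j).1 (hvX.1 j).1) with h0 | h0
            · have hu0 : u j = 0 := by linarith [(huX.1 j).1, (hvX.1 j).1]
              have hv0 : v j = 0 := by linarith [(huX.1 j).1, (hvX.1 j).1]
              rw [hu0, hv0]
              simp [Real.zero_rpow (ne_of_gt h1q0)]
            · have h := aux_scalar hq0 hq1 h0 (huX.1 j).1
                (by linarith [(hvX.1 j).1] : u j ≤ u j + v j) (hvX.1 j).1
                (by linarith [(huX.1 j).1] : v j ≤ u j + v j) ht0 ht1
              linarith [h]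
          have hDT : (q*(1+q)/2)*(t*(1-t))*T ≤ Dsum := by
            have hs := Finset.sum_le_sum (fun j (_ : j ∈ Finset.univ) => aux2 j)
            have e3 : ∀ j ∈ Finset.univ,
                (q*(1+q)/2)*((u j + v j)^(q-1)*(t*(1-t)*(u j - v j)^2))
                = ((q*(1+q)/2)*(t*(1-t))) * ((u j + v j)^(q-1)*(u j - v j)^2) := by
              intro j _; ring
            rw [Finset.sum_congr rfl e3, ← Finset.mul_sum] at hs
            exact hs
          have hCS : L^2 ≤ (∑ j, (u j + v j)^(1-q)) * T := by
            apply Finset.sum_sq_le_sum_mul_sum_of_sq_eq_mul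
            · exact fun j _ => Real.rpow_nonneg (add_nonneg (huX.1 j).1 (hvX.1 j).1) _
            · exact fun j _ => mul_nonneg
                (Real.rpow_nonneg (add_nonneg (huX.1 j).1 (hvX.1 j).1) _) (sq_nonneg _)
            · intro j _
              rcases eq_or_lt_of_le (add_nonneg (huX.1 j).1 (hvX.1 j).1) with h0 | h0
              · have hu0 : u j = 0 := by linarith [(huX.1 j).1, (hvX.1 j).1]
                have hv0 : v j = 0 := by linarith [(huX.1 j).1, (hvX.1 j).1]
                rw [hu0, hv0]
                simp
              · rw [sq_abs, ← mul_assoc, ← Real.rpow_add h0,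
                  show (1:ℝ)-q+(q-1) = 0 by ring, Real.rpow_zero, one_mul]
          have hJ : ∑ j, (u j + v j)^(1-q) ≤ (m:ℝ)^q * (2*(k:ℝ))^(1-q) := by
            have hj := aux_jensen (m := m) (by omega) (p := 1-q) (by linarith) (by linarith)
              (fun j => u j + v j) (fun j => add_nonneg (huX.1 j).1 (hvX.1 j).1)
            have e7 : ∑ j, (u j + v j) = 2*(k:ℝ) := by
              rw [Finset.sum_add_distrib, huX.2, hvX.2]; ring
            rw [show (1:ℝ)-(1-q) = q by ring, e7] at hj
            exact hj
          have hJ2 : β * ((m:ℝ)^q * (2*(k:ℝ))^(1-q)) ≤ 4*q*(k:ℝ)^2 := by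
            have e4 : (2*(k:ℝ))^(1-q) = (2:ℝ)^(1-q) * (k:ℝ)^(1-q) :=
              Real.mul_rpow (by norm_num) hk0.le
            have e5 : (2:ℝ)^(1-q) ≤ 2 := by
              calc (2:ℝ)^(1-q) ≤ (2:ℝ)^(1:ℝ) :=
                    Real.rpow_le_rpow_of_exponent_le one_le_two (by linarith)
                _ = 2 := Real.rpow_one 2
            have e6 : (k:ℝ)^(1+q) * (k:ℝ)^(1-q) = (k:ℝ)^2 := by
              rw [← Real.rpow_add hk0, show (1:ℝ)+q+(1-q) = ((2:ℕ):ℝ) by push_cast; ring,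
                Real.rpow_natCast]
            calc β * ((m:ℝ)^q * (2*(k:ℝ))^(1-q)) = (β*(m:ℝ)^q) * (2*(k:ℝ))^(1-q) := by ring
              _ ≤ (2*q*(k:ℝ)^(1+q)) * (2*(k:ℝ))^(1-q) :=
                  mul_le_mul_of_nonneg_right hkey (Real.rpow_nonneg (by positivity) _)
              _ = (2*q*(k:ℝ)^(1+q)) * ((2:ℝ)^(1-q) * (k:ℝ)^(1-q)) := by rw [e4]
              _ ≤ (2*q*(k:ℝ)^(1+q)) * (2 * (k:ℝ)^(1-q)) := by
                  apply mul_le_mul_of_nonneg_left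
                    (mul_le_mul_of_nonneg_right e5 (Real.rpow_nonneg hk0.le _))
                  positivity
              _ = 4*q*((k:ℝ)^(1+q) * (k:ℝ)^(1-q)) := by ring
              _ = 4*q*(k:ℝ)^2 := by rw [e6]
          have hβJ : β * (∑ j, (u j + v j)^(1-q)) ≤ 4*q*(k:ℝ)^2 :=
            le_trans (mul_le_mul_of_nonneg_left hJ hβ0.le) hJ2
          have h11 : β * L^2 ≤ 4*q*(k:ℝ)^2 * T := by
            calc β * L^2 ≤ β * ((∑ j, (u j + v j)^(1-q)) * T) :=
                  mul_le_mul_of_nonneg_left hCS hβ0.le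
              _ = (β * (∑ j, (u j + v j)^(1-q))) * T := by ring
              _ ≤ 4*q*(k:ℝ)^2 * T := mul_le_mul_of_nonneg_right hβJ hT0
          have h12 := mul_le_mul_of_nonneg_left hDT hC0.le
          have h14 := mul_le_mul_of_nonneg_left h11 ht01
          have h16 := mul_le_mul_of_nonneg_left h14 (show (0:ℝ) ≤ 1/β by positivity)
          have h17 : (1/β)*(t*(1-t)*(β*L^2)) = t*(1-t)*L^2 := by field_simp
          have h15 : (2*q/β)*(t*(1-t))*T*(2*(k:ℝ)^2) = (1/β)*(t*(1-t)*(4*q*(k:ℝ)^2*T)) := by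
            field_simp; ring
          have h13' : C*((q*(1+q)/2)*(t*(1-t))*T)*(2*(k:ℝ)^2)
              = (2*q/β)*(t*(1-t))*T*(2*(k:ℝ)^2) := by
            rw [hC]; field_simp; ring
          have h18 := mul_le_mul_of_nonneg_right h12 (show (0:ℝ) ≤ 2*(k:ℝ)^2 by positivity)
          rw [show (1/2)*t*(1-t)*(L/(k:ℝ))^2 = (t*(1-t)*L^2)/(2*(k:ℝ)^2) by
            field_simp]
          rw [div_le_iff₀ (by positivity)]
          linarith
        rcases max_choice (2*|u j0 - v j0|) (L/(k:ℝ)) with hmc | hmc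
        · rw [hrdef, hmc] at hle
          linarith
        · rw [hrdef, hmc] at hle
          linarith
    -- convert `key` into the stated inequality
    have e1 : Dsum = t * (∑ j, (u j)^(1+q)) + (1-t) * (∑ j, (v j)^(1+q))
        - ∑ j, (t*(u j) + (1-t)*(v j))^(1+q) := by
      rw [hDsumdef, Finset.sum_sub_distrib, Finset.sum_add_distrib,
        ← Finset.mul_sum, ← Finset.mul_sum]
    rw [hω]
    simp only [Pi.add_apply, Pi.smul_apply, smul_eq_mul]
    have e2 : C * Dsum = t * (C * ∑ j, (u j)^(1+q)) + (1-t) * (C * ∑ j, (v j)^(1+q))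
        - C * ∑ j, (t*(u j) + (1-t)*(v j))^(1+q) := by rw [e1]; ring
    rw [hC] at e2 key
    linarith
  -- convexity of X
  have hXconv : Convex ℝ X := by
    rw [hX]
    intro x hx y hy a b ha hb hab
    refine ⟨fun j => ⟨?_, ?_⟩, ?_⟩
    · have h1 := (hx.1 j).1; have h2 := (hy.1 j).1
      simp only [Pi.add_apply, Pi.smul_apply, smul_eq_mul]
      exact add_nonneg (mul_nonneg ha h1) (mul_nonneg hb h2)
    · simp only [Pi.add_apply, Pi.smul_apply, smul_eq_mul]
      nlinarith [(hx.1 j).2, (hy.1 j).2, mul_le_mul_of_nonneg_left (hx.1 j).2 ha,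
        mul_le_mul_of_nonneg_left (hy.1 j).2 hb]
    · simp only [Pi.add_apply, Pi.smul_apply, smul_eq_mul]
      rw [Finset.sum_add_distrib, ← Finset.mul_sum, ← Finset.mul_sum, hx.2, hy.2]
      linear_combination (k:ℝ) * hab
  refine ⟨?_, ⟨hXconv, ?_⟩, key3⟩
  · -- continuity
    have hrpow_cont : Continuous fun s : ℝ => s ^ (1+q) :=
      continuous_iff_continuousAt.2 fun x =>
        Real.continuousAt_rpow_const x _ (Or.inr (by linarith))
    rw [hω]
    exact (continuous_const.mul (continuous_finset_sum _ fun j _ =>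
      hrpow_cont.comp (continuous_apply j))).continuousOn
  · -- convexity of ω from key3
    intro x hx y hy a b ha hb hab
    have hb' : b = 1 - a := by linarith
    subst hb'
    have h := key3 x hx y hy a ⟨ha, by linarith⟩
    have hnn : 0 ≤ (1/2)*a*(1-a) * Nrm (x - y) ^ 2 := by
      have h1 : 0 ≤ a*(1-a) := mul_nonneg ha hb
      nlinarith [sq_nonneg (Nrm (x - y))]
    simp only [smul_eq_mul]
    linarith
end

section
/- For every integer k ≥ 1 there exists a constant C > 0 depending only on k with the following property. Let E be a finite-dimensional real inner product space, W ⊆ E a convex compact set with 0 ∈ W, and Q a symmetric k-linear form on E such that |Q(w, …, w)| ≤ M for all w ∈ W, where M ≥ 0. Then for every z in the linear span of W, |Q(z, …, z)| ≤ C·M·‖z‖_W^k, where ‖·‖_W is the gauge (Minkowski functional) of ½[W−W] := {(u−v)/2 : u, v ∈ W} on the span of W. -/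
open Pointwise

open Finset

section Aux


lemma alt_sum {k : ℕ} (T : Finset (Fin k)) :
    ∑ S ∈ (Finset.univ : Finset (Fin k)).powerset,
      (if T ⊆ S then ((-1 : ℝ)) ^ S.card else 0)
      = if T = Finset.univ then (-1 : ℝ) ^ k else 0 := by
  classical
  rw [Finset.sum_ite, Finset.sum_const_zero, add_zero]
  have hbij : ∑ S ∈ Finset.univ.powerset.filter (fun S => T ⊆ S), ((-1:ℝ)) ^ S.card
      = ∑ U ∈ Tᶜ.powerset, ((-1:ℝ)) ^ (U.card + T.card) := by
    refine Finset.sum_nbij' (fun S => S \ T) (fun U => U ∪ T) ?_ ?_ ?_ ?_ ?_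
    · intro S hS
      simp only [Finset.mem_filter, Finset.mem_powerset] at hS
      simp only [Finset.mem_powerset]
      intro x hx
      simp only [Finset.mem_sdiff] at hx
      simp [Finset.mem_compl, hx.2]
    · intro U hU
      simp only [Finset.mem_powerset] at hU
      simp only [Finset.mem_filter, Finset.mem_powerset]
      exact ⟨Finset.subset_univ _, Finset.subset_union_right⟩
    · intro S hS
      simp only [Finset.mem_filter, Finset.mem_powerset] at hS
      exact Finset.sdiff_union_of_subset hS.2
    · intro U hU
      simp only [Finset.mem_powerset] at hU
      refine Finset.union_sdiff_cancel_right (Finset.disjoint_left.mpr ?_)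
      intro x hx hx2
      have h2 := hU hx
      rw [Finset.mem_compl] at h2
      exact absurd hx2 h2
    · intro S hS
      simp only [Finset.mem_filter, Finset.mem_powerset] at hS
      rw [Finset.card_sdiff_of_subset hS.2, Nat.sub_add_cancel (Finset.card_le_card hS.2)]
  rw [hbij]
  simp_rw [pow_add]
  rw [← Finset.sum_mul]
  have h' : ∑ U ∈ Tᶜ.powerset, ((-1:ℝ)) ^ U.card = if Tᶜ = ∅ then 1 else 0 := by
    exact_mod_cast congrArg (fun z : ℤ => (z : ℝ))
      (@Finset.sum_powerset_neg_one_pow_card (Fin k) _ Tᶜ)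
  rw [h']
  by_cases hT : T = Finset.univ
  · simp [hT]
  · have : Tᶜ ≠ ∅ := by
      simp only [ne_eq, Finset.compl_eq_empty_iff]
      exact hT
    simp [hT, this]

lemma polar_identity {k : ℕ} {E : Type} [AddCommGroup E] [Module ℝ E]
    (Q : MultilinearMap ℝ (fun _ : Fin k => E) ℝ)
    (hsym : ∀ (z : Fin k → E) (e : Equiv.Perm (Fin k)), Q (z ∘ e) = Q z)
    (x : Fin k → E) :
    ∑ S ∈ (Finset.univ : Finset (Fin k)).powerset,
        (-1 : ℝ) ^ S.card * Q (fun _ => ∑ i ∈ S, x i)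
      = (k.factorial : ℝ) * ((-1 : ℝ) ^ k * Q x) := by
  classical
  have step1 : ∀ S : Finset (Fin k),
      (Q fun _ => ∑ i ∈ S, x i)
        = ∑ r ∈ Fintype.piFinset (fun _ : Fin k => S), Q (fun i => x (r i)) := by
    intro S
    exact Q.map_sum_finset (fun _ j => x j) (fun _ => S)
  calc
    ∑ S ∈ (Finset.univ : Finset (Fin k)).powerset,
        (-1 : ℝ) ^ S.card * Q (fun _ => ∑ i ∈ S, x i)
      = ∑ S ∈ (Finset.univ : Finset (Fin k)).powerset,
          ∑ r ∈ (Finset.univ : Finset (Fin k → Fin k)),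
            (if Finset.image r Finset.univ ⊆ S then (-1 : ℝ) ^ S.card else 0)
              * Q (fun i => x (r i)) := by
        refine Finset.sum_congr rfl fun S _ => ?_
        rw [step1 S, Finset.mul_sum]
        have hpi : Fintype.piFinset (fun _ : Fin k => S)
            = (Finset.univ : Finset (Fin k → Fin k)).filter
              (fun r => Finset.image r Finset.univ ⊆ S) := by
          ext r
          simp [Fintype.mem_piFinset, Finset.image_subset_iff]
        rw [hpi, Finset.sum_filter]
        refine Finset.sum_congr rfl fun r _ => ?_
        split <;> simp
    _ = ∑ r ∈ (Finset.univ : Finset (Fin k → Fin k)),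
          (∑ S ∈ (Finset.univ : Finset (Fin k)).powerset,
            (if Finset.image r Finset.univ ⊆ S then (-1 : ℝ) ^ S.card else 0))
              * Q (fun i => x (r i)) := by
        rw [Finset.sum_comm]
        refine Finset.sum_congr rfl fun r _ => ?_
        rw [Finset.sum_mul]
    _ = ∑ r ∈ (Finset.univ : Finset (Fin k → Fin k)),
          (if Finset.image r Finset.univ = Finset.univ then (-1 : ℝ) ^ k else 0)
              * Q (fun i => x (r i)) := by
        refine Finset.sum_congr rfl fun r _ => ?_
        rw [alt_sum]
    _ = ∑ r ∈ (Finset.univ : Finset (Fin k → Fin k)).filter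
          (fun r => Finset.image r Finset.univ = Finset.univ),
          (-1 : ℝ) ^ k * Q (fun i => x (r i)) := by
        rw [Finset.sum_filter]
        refine Finset.sum_congr rfl fun r _ => ?_
        split <;> simp
    _ = ∑ _e ∈ (Finset.univ : Finset (Equiv.Perm (Fin k))),
          (-1 : ℝ) ^ k * Q x := by
        refine Finset.sum_bij
          (fun r hr => Equiv.ofBijective r
            ⟨Finite.injective_iff_surjective.mpr ?_, ?_⟩) ?_ ?_ ?_ ?_
        · -- surjective (for injectivity)
          intro b
          have hr' := (Finset.mem_filter.mp hr).2
          have : b ∈ Finset.image r Finset.univ := by rw [hr']; exact Finset.mem_univ b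
          obtain ⟨a, -, ha⟩ := Finset.mem_image.mp this
          exact ⟨a, ha⟩
        · intro b
          have hr' := (Finset.mem_filter.mp hr).2
          have : b ∈ Finset.image r Finset.univ := by rw [hr']; exact Finset.mem_univ b
          obtain ⟨a, -, ha⟩ := Finset.mem_image.mp this
          exact ⟨a, ha⟩
        · intro a ha; exact Finset.mem_univ _
        · intro a₁ h₁ a₂ h₂ heq
          exact congrArg (fun e : Equiv.Perm (Fin k) => e.toFun) heq
        · intro e _
          refine ⟨(e : Fin k → Fin k), ?_, ?_⟩
          · simp only [Finset.mem_filter, Finset.mem_univ, true_and]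
            exact Finset.image_univ_equiv e
          · ext y
            simp
        · intro r hr
          have hsurj : Function.Surjective r := by
            intro b
            have hr' := (Finset.mem_filter.mp hr).2
            have hb : b ∈ Finset.image r Finset.univ := by
              rw [hr']; exact Finset.mem_univ b
            obtain ⟨a, -, ha⟩ := Finset.mem_image.mp hb
            exact ⟨a, ha⟩
          have hbij : Function.Bijective r :=
            ⟨Finite.injective_iff_surjective.mpr hsurj, hsurj⟩
          have hfun : (fun i => x (r i)) = x ∘ (Equiv.ofBijective r hbij) := rfl
          rw [hfun, hsym]
    _ = (k.factorial : ℝ) * ((-1 : ℝ) ^ k * Q x) := by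
        rw [Finset.sum_const, Finset.card_univ, Fintype.card_perm, Fintype.card_fin,
          nsmul_eq_mul]


lemma polar_bound {k : ℕ} {E : Type} [AddCommGroup E] [Module ℝ E]
    {W : Set E} (hW0 : (0 : E) ∈ W) (hWc : Convex ℝ W)
    (Q : MultilinearMap ℝ (fun _ : Fin k => E) ℝ)
    (hsym : ∀ (z : Fin k → E) (e : Equiv.Perm (Fin k)), Q (z ∘ e) = Q z)
    {M : ℝ} (hQ : ∀ w ∈ W, |Q (fun _ => w)| ≤ M)
    (hk : 1 ≤ k) (x : Fin k → E) (hx : ∀ i, x i ∈ W) :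
    |Q x| ≤ 2 ^ k * (k : ℝ) ^ k * M := by
  classical
  have hkpos : (0 : ℝ) < k := by exact_mod_cast hk
  have hId := polar_identity Q hsym x
  have hM : 0 ≤ M := le_trans (abs_nonneg _) (hQ 0 hW0)
  have key : ∀ S : Finset (Fin k),
      |Q (fun _ => ∑ i ∈ S, x i)| ≤ (k : ℝ) ^ k * M := by
    intro S
    set c : E := (k : ℝ)⁻¹ • ∑ i ∈ S, x i with hc
    have hcW : c ∈ W := by
      have hrepr : c = ∑ i ∈ Finset.univ, (k : ℝ)⁻¹ • (if i ∈ S then x i else 0) := by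
        rw [hc, ← Finset.smul_sum]
        congr 1
        rw [Finset.sum_ite_mem, Finset.univ_inter]
      rw [hrepr]
      refine hWc.sum_mem (fun i _ => by positivity) ?_ (fun i _ => ?_)
      · rw [Finset.sum_const, Finset.card_univ, Fintype.card_fin, nsmul_eq_mul]
        field_simp
      · split
        · exact hx i
        · exact hW0
    have hsum : (∑ i ∈ S, x i) = (k : ℝ) • c := by
      rw [hc, smul_smul, mul_inv_cancel₀ hkpos.ne', one_smul]
    rw [hsum]
    have hQsmul : (Q fun _ => (k : ℝ) • c) = ((k : ℝ)) ^ k * Q (fun _ => c) := by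
      have h := Q.map_smul_univ (fun _ => (k : ℝ)) (fun _ => c)
      simpa [Finset.prod_const, Finset.card_univ, smul_eq_mul] using h
    rw [hQsmul, abs_mul, abs_pow, abs_of_nonneg hkpos.le]
    exact mul_le_mul_of_nonneg_left (hQ c hcW) (by positivity)
  have habs : (k.factorial : ℝ) * |Q x| ≤ 2 ^ k * ((k : ℝ) ^ k * M) := by
    have h1 : |∑ S ∈ (Finset.univ : Finset (Fin k)).powerset,
        (-1 : ℝ) ^ S.card * Q (fun _ => ∑ i ∈ S, x i)| ≤ 2 ^ k * ((k : ℝ) ^ k * M) := by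
      refine le_trans (Finset.abs_sum_le_sum_abs _ _) ?_
      have h2 : ∀ S ∈ (Finset.univ : Finset (Fin k)).powerset,
          |(-1 : ℝ) ^ S.card * Q (fun _ => ∑ i ∈ S, x i)| ≤ (k : ℝ) ^ k * M := by
        intro S _
        rw [abs_mul, abs_pow, abs_neg, abs_one, one_pow, one_mul]
        exact key S
      refine le_trans (Finset.sum_le_sum h2) ?_
      rw [Finset.sum_const, Finset.card_powerset, Finset.card_univ, Fintype.card_fin,
        nsmul_eq_mul]
      push_cast
      exact le_refl _
    rw [hId] at h1
    rw [abs_mul, abs_mul, abs_pow, abs_neg, abs_one, one_pow, one_mul,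
      Nat.abs_cast] at h1
    exact h1
  have hfac : (1 : ℝ) ≤ (k.factorial : ℝ) := by exact_mod_cast k.factorial_pos
  calc |Q x| = 1 * |Q x| := (one_mul _).symm
    _ ≤ (k.factorial : ℝ) * |Q x| :=
        mul_le_mul_of_nonneg_right hfac (abs_nonneg _)
    _ ≤ 2 ^ k * ((k : ℝ) ^ k * M) := habs
    _ = 2 ^ k * (k : ℝ) ^ k * M := by ring

end Aux

lemma bound_on_K {k : ℕ} {E : Type} [AddCommGroup E] [Module ℝ E]
    {W : Set E} (hW0 : (0 : E) ∈ W) (hWc : Convex ℝ W)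
    (Q : MultilinearMap ℝ (fun _ : Fin k => E) ℝ)
    (hsym : ∀ (z : Fin k → E) (e : Equiv.Perm (Fin k)), Q (z ∘ e) = Q z)
    {M : ℝ} (hQ : ∀ w ∈ W, |Q (fun _ => w)| ≤ M)
    (hk : 1 ≤ k) {y : E} (hy : y ∈ (2⁻¹ : ℝ) • (W - W)) :
    |Q (fun _ => y)| ≤ (2 ^ k * (2 ^ k * (k : ℝ) ^ k)) * M := by
  classical
  have half_mem : ∀ w ∈ W, (2⁻¹ : ℝ) • w ∈ W := by
    intro w hw
    have h := hWc hw hW0 (by norm_num : (0:ℝ) ≤ 2⁻¹) (by norm_num : (0:ℝ) ≤ 2⁻¹)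
      (by norm_num)
    simpa using h
  obtain ⟨d, hd, rfl⟩ := hy
  obtain ⟨u, hu, v, hv, rfl⟩ := hd
  set m : Fin k → E := fun _ => (2⁻¹ : ℝ) • u
  set m' : Fin k → E := fun _ => -((2⁻¹ : ℝ) • v)
  have hQeq : (Q fun _ => (2⁻¹ : ℝ) • (u - v)) = ∑ s : Finset (Fin k), Q (s.piecewise m m') := by
    have harg : (fun _ : Fin k => (2⁻¹ : ℝ) • (u - v)) = m + m' := by
      funext i
      simp only [Pi.add_apply, m, m']
      rw [smul_sub, sub_eq_add_neg]
    rw [harg]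
    exact Q.map_add_univ m m'
  rw [hQeq]
  have hterm : ∀ s : Finset (Fin k),
      |Q (s.piecewise m m')| ≤ 2 ^ k * (k : ℝ) ^ k * M := by
    intro s
    set ε : Fin k → ℝ := fun i => if i ∈ s then 1 else -1
    set x' : Fin k → E := fun i => if i ∈ s then (2⁻¹ : ℝ) • u else (2⁻¹ : ℝ) • v
    have hpw : s.piecewise m m' = fun i => ε i • x' i := by
      funext i
      by_cases h : i ∈ s
      · simp [Finset.piecewise, h, ε, x', m, m']
      · simp [Finset.piecewise, h, ε, x', m, m']
    have hsm : Q (s.piecewise m m') = (∏ i, ε i) • Q x' := by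
      rw [hpw]; exact Q.map_smul_univ ε x'
    have hprod : |∏ i, ε i| = 1 := by
      rw [Finset.abs_prod]
      refine Finset.prod_eq_one (fun i _ => ?_)
      by_cases h : i ∈ s <;> simp [ε, h]
    rw [hsm, smul_eq_mul, abs_mul, hprod, one_mul]
    refine polar_bound hW0 hWc Q hsym hQ hk x' (fun i => ?_)
    by_cases h : i ∈ s
    · simp only [x', if_pos h]; exact half_mem u hu
    · simp only [x', if_neg h]; exact half_mem v hv
  have hM : 0 ≤ M := le_trans (abs_nonneg _) (hQ 0 hW0)
  refine le_trans (Finset.abs_sum_le_sum_abs _ _) ?_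
  refine le_trans (Finset.sum_le_sum (fun s _ => hterm s)) ?_
  rw [Finset.sum_const, Finset.card_univ, Fintype.card_finset, Fintype.card_fin,
    nsmul_eq_mul]
  push_cast
  ring_nf
  exact le_refl _

lemma absorb {E : Type} [AddCommGroup E] [Module ℝ E]
    {W : Set E} (hW0 : (0 : E) ∈ W) (hWc : Convex ℝ W)
    {z : E} (hz : z ∈ Submodule.span ℝ W) :
    ∃ r : ℝ, 0 < r ∧ z ∈ r • ((2⁻¹ : ℝ) • (W - W)) := by
  set K : Set E := (2⁻¹ : ℝ) • (W - W) with hK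
  have hK0 : (0 : E) ∈ K := by
    have h0 : (0 : E) ∈ W - W := by
      have := Set.sub_mem_sub hW0 hW0
      simpa using this
    have := Set.smul_mem_smul_set (a := (2⁻¹ : ℝ)) h0
    simpa using this
  have hKc : Convex ℝ K := (hWc.sub hWc).smul _
  have hKneg : ∀ y ∈ K, -y ∈ K := by
    intro y hy
    obtain ⟨d, hd, rfl⟩ := hy
    obtain ⟨u, hu, v, hv, rfl⟩ := hd
    have : -((2⁻¹ : ℝ) • (u - v)) = (2⁻¹ : ℝ) • (v - u) := by
      rw [← smul_neg, neg_sub]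
    rw [this]
    exact Set.smul_mem_smul_set (Set.sub_mem_sub hv hu)
  induction hz using Submodule.span_induction with
  | mem w hw =>
      refine ⟨2, two_pos, ?_⟩
      have h1 : w - 0 ∈ W - W := Set.sub_mem_sub hw hW0
      have h2 : (2⁻¹ : ℝ) • (w - 0) ∈ K := Set.smul_mem_smul_set h1
      have h3 := Set.smul_mem_smul_set (a := (2 : ℝ)) h2
      have h4 : (2 : ℝ) • (2⁻¹ : ℝ) • (w - 0) = w := by
        rw [smul_smul]; norm_num
      rwa [h4] at h3
  | zero =>
      refine ⟨1, one_pos, ?_⟩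
      have := Set.smul_mem_smul_set (a := (1 : ℝ)) hK0
      simpa using this
  | add x y hx hy ihx ihy =>
      obtain ⟨r₁, hr₁, y₁, hy₁, rfl⟩ := ihx
      obtain ⟨r₂, hr₂, y₂, hy₂, rfl⟩ := ihy
      refine ⟨r₁ + r₂, by positivity, ?_⟩
      have hne : r₁ + r₂ ≠ 0 := (by positivity : (0:ℝ) < r₁ + r₂).ne'
      have hmem : (r₁ / (r₁ + r₂)) • y₁ + (r₂ / (r₁ + r₂)) • y₂ ∈ K :=
        hKc hy₁ hy₂ (by positivity) (by positivity) (by field_simp)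
      have heq : r₁ • y₁ + r₂ • y₂
          = (r₁ + r₂) • ((r₁ / (r₁ + r₂)) • y₁ + (r₂ / (r₁ + r₂)) • y₂) := by
        rw [smul_add, smul_smul, smul_smul]
        congr 2 <;> field_simp
      rw [heq]
      exact Set.smul_mem_smul_set hmem
  | smul a x hx ih =>
      obtain ⟨r, hr, y, hy, rfl⟩ := ih
      rcases lt_trichotomy a 0 with ha | ha | ha
      · refine ⟨(-a) * r, mul_pos (neg_pos.mpr ha) hr, ?_⟩
        have heq : a • r • y = ((-a) * r) • (-y) := by
          rw [smul_neg, ← neg_smul, smul_smul]; ring_nf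
        rw [heq]
        exact Set.smul_mem_smul_set (hKneg y hy)
      · refine ⟨1, one_pos, ?_⟩
        rw [ha, zero_smul]
        have := Set.smul_mem_smul_set (a := (1 : ℝ)) hK0
        simpa using this
      · refine ⟨a * r, mul_pos ha hr, ?_⟩
        have heq : a • r • y = (a * r) • y := smul_smul a r y
        rw [heq]
        exact Set.smul_mem_smul_set hy

/-- For every integer `k ≥ 1` there is a constant `C > 0` depending only on
`k` such that: for every finite-dimensional real inner product space `E`, every convex compact
`W ⊆ E` with `0 ∈ W`, and every symmetric `k`-linear form `Q` on `E` with `|Q(w,…,w)| ≤ M` for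
all `w ∈ W`, one has `|Q(z,…,z)| ≤ C·M·‖z‖_W^k` for every `z ∈ span(W)`, where `‖·‖_W` is the
gauge of `½[W−W]`. -/
theorem stmt_14 (k : ℕ) (hk : 1 ≤ k) :
    ∃ C : ℝ, 0 < C ∧
      ∀ (E : Type) (_ : NormedAddCommGroup E) (_ : InnerProductSpace ℝ E)
        (_ : FiniteDimensional ℝ E)
        (W : Set E), W.Nonempty → Convex ℝ W → IsCompact W → (0 : E) ∈ W →
        ∀ (Q : MultilinearMap ℝ (fun _ : Fin k => E) ℝ),
          (∀ (z : Fin k → E) (e : Equiv.Perm (Fin k)), Q (z ∘ e) = Q z) →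
          ∀ M : ℝ, 0 ≤ M →
          (∀ w ∈ W, |Q (fun _ => w)| ≤ M) →
          ∀ z ∈ Submodule.span ℝ W,
            |Q (fun _ => z)| ≤ C * M * gauge ((2⁻¹ : ℝ) • (W - W)) z ^ k := by
  have hkpos : (0 : ℝ) < (k : ℝ) := by exact_mod_cast hk
  refine ⟨2 ^ k * (2 ^ k * (k : ℝ) ^ k), by positivity, ?_⟩
  set C : ℝ := 2 ^ k * (2 ^ k * (k : ℝ) ^ k) with hC
  intro E _ _ _ W _ hWc _ hW0 Q hsym M hM hQ z hz
  set K : Set E := (2⁻¹ : ℝ) • (W - W) with hKdef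
  set g : ℝ := gauge K z with hg
  have hg0 : 0 ≤ g := gauge_nonneg z
  have key : ∀ t : ℝ, g < t → |Q (fun _ => z)| ≤ C * M * t ^ k := by
    intro t ht
    obtain ⟨r₀, hr₀, hzr₀⟩ := absorb hW0 hWc hz
    have hset : {r : ℝ | 0 < r ∧ z ∈ r • K}.Nonempty := ⟨r₀, hr₀, hzr₀⟩
    have hbdd : BddBelow {r : ℝ | 0 < r ∧ z ∈ r • K} := ⟨0, fun r hr => hr.1.le⟩
    have ht' : sInf {r : ℝ | 0 < r ∧ z ∈ r • K} < t := ht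
    obtain ⟨r, ⟨hrpos, hzr⟩, hrt⟩ := (csInf_lt_iff hbdd hset).mp ht'
    obtain ⟨y, hy, rfl⟩ := hzr
    have hQy := bound_on_K hW0 hWc Q hsym hQ hk hy
    have hQsmul : (Q fun _ => r • y) = r ^ k * Q (fun _ => y) := by
      have h := Q.map_smul_univ (fun _ => r) (fun _ => y)
      simpa [Finset.prod_const, Finset.card_univ, smul_eq_mul] using h
    rw [hQsmul, abs_mul, abs_pow, abs_of_nonneg hrpos.le]
    calc r ^ k * |Q fun _ => y| ≤ r ^ k * (C * M) := by
          refine mul_le_mul_of_nonneg_left ?_ (by positivity)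
          simpa [hC, mul_assoc] using hQy
      _ ≤ t ^ k * (C * M) := by
          refine mul_le_mul_of_nonneg_right ?_ (by positivity)
          exact pow_le_pow_left₀ hrpos.le hrt.le k
      _ = C * M * t ^ k := by ring
  have htend : Filter.Tendsto (fun n : ℕ => C * M * (g + 1 / (n + 1)) ^ k)
      Filter.atTop (nhds (C * M * g ^ k)) := by
    have h1 : Filter.Tendsto (fun n : ℕ => g + 1 / (n + 1))
        Filter.atTop (nhds g) := by
      have h0 := tendsto_one_div_add_atTop_nhds_zero_nat (𝕜 := ℝ)
      have := Filter.Tendsto.add (tendsto_const_nhds (x := g)) h0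
      simpa using this
    exact ((h1.pow k).const_mul (C * M))
  refine ge_of_tendsto' htend (fun n => ?_)
  refine key _ ?_
  have : (0 : ℝ) < 1 / (n + 1) := by positivity
  linarith
end

section
/- Let q ∈ (0, 1] and let a, b be nonzero real numbers with |a| ≥ |b| and a ≠ b. Then (sgn(a)·|a|^q − sgn(b)·|b|^q)/(a − b) ≥ q·|a|^{q−1}. -/
open Real

private lemma key1 {q a b : ℝ} (hq0 : 0 < q) (hq1 : q ≤ 1) (hb : 0 < b) (hba : b < a) :
    q * a ^ (q - 1) ≤ (a ^ q - b ^ q) / (a - b) := by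
  have ha : 0 < a := hb.trans hba
  rw [le_div_iff₀ (by linarith)]
  have ht0 : (0:ℝ) < b / a := div_pos hb ha
  have ht1 : b / a < 1 := (div_lt_one ha).mpr hba
  have hbern := rpow_one_add_le_one_add_mul_self (s := b / a - 1) (p := q)
    (by linarith) hq0.le hq1
  rw [show (1 : ℝ) + (b / a - 1) = b / a by ring] at hbern
  have hdiv : (b / a) ^ q = b ^ q / a ^ q := Real.div_rpow hb.le ha.le q
  rw [hdiv] at hbern
  have haq : 0 < a ^ q := Real.rpow_pos_of_pos ha q
  have hsub : a ^ (q - 1) = a ^ q / a := by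
    rw [Real.rpow_sub ha, Real.rpow_one]
  have h2 : b ^ q ≤ a ^ q * (1 + q * (b / a - 1)) := by
    calc b ^ q = a ^ q * (b ^ q / a ^ q) := by field_simp
    _ ≤ a ^ q * (1 + q * (b / a - 1)) := by
        exact mul_le_mul_of_nonneg_left hbern haq.le
  have : a ^ q * (1 + q * (b / a - 1)) = a ^ q - q * (a ^ q / a) * (a - b) := by
    field_simp; ring
  rw [this, ← hsub] at h2
  linarith

private lemma key2 {q a x : ℝ} (hq0 : 0 < q) (hq1 : q ≤ 1) (hx : 0 < x) (hxa : x ≤ a) :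
    q * a ^ (q - 1) ≤ (a ^ q + x ^ q) / (a + x) := by
  have ha : 0 < a := hx.trans_le hxa
  rw [le_div_iff₀ (by linarith)]
  have haq : 0 < a ^ q := Real.rpow_pos_of_pos ha q
  have hsub : a ^ (q - 1) = a ^ q / a := by
    rw [Real.rpow_sub ha, Real.rpow_one]
  have h1 : q * a ^ (q - 1) * a ≤ a ^ q := by
    rw [hsub]
    have : q * (a ^ q / a) * a = q * a ^ q := by field_simp
    rw [this]
    nlinarith
  have hexp : a ^ (q - 1) ≤ x ^ (q - 1) :=
    Real.rpow_le_rpow_of_nonpos hx hxa (by linarith)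
  have hxq : x ^ (q - 1) * x = x ^ q := by
    rw [Real.rpow_sub hx, Real.rpow_one]
    field_simp
  have h2 : q * a ^ (q - 1) * x ≤ x ^ q := by
    have hpos : 0 ≤ a ^ (q - 1) := (Real.rpow_pos_of_pos ha _).le
    have hq' : q * a ^ (q - 1) ≤ a ^ (q - 1) := by nlinarith
    have : q * a ^ (q - 1) * x ≤ a ^ (q - 1) * x :=
      mul_le_mul_of_nonneg_right hq' hx.le
    have h3 : a ^ (q - 1) * x ≤ x ^ (q - 1) * x :=
      mul_le_mul_of_nonneg_right hexp hx.le
    rw [hxq] at h3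
    linarith
  nlinarith

/-- For `q ∈ (0,1]` and nonzero reals `a, b` with `|a| ≥ |b|` and `a ≠ b`,
the divided difference `(sgn(a)|a|^q − sgn(b)|b|^q)/(a − b)` is at least `q·|a|^{q−1}`. -/
theorem stmt_17 (q : ℝ) (hq0 : 0 < q) (hq1 : q ≤ 1)
    (a b : ℝ) (ha : a ≠ 0) (hb : b ≠ 0) (hab : |b| ≤ |a|) (hne : a ≠ b) :
    q * |a| ^ (q - 1) ≤ (Real.sign a * |a| ^ q - Real.sign b * |b| ^ q) / (a - b) := by
  rcases ha.lt_or_gt with haneg | hapos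
  · -- a < 0; reduce to -a, -b
    rcases hb.lt_or_gt with hbneg | hbpos
    · -- both negative: -b ≤ -a? |b| ≤ |a| means -b ≤ -a i.e. a ≤ b, and a ≠ b so a < b, i.e. -b < -a
      rw [abs_of_neg haneg, abs_of_neg hbneg, Real.sign_of_neg haneg, Real.sign_of_neg hbneg]
      have h : -b < -a := by
        rw [abs_of_neg haneg, abs_of_neg hbneg] at hab
        rcases lt_or_eq_of_le hab with h | h
        · linarith
        · exact absurd (by linarith : a = b) hne
      have := key1 hq0 hq1 (by linarith : (0:ℝ) < -b) h
      calc q * (-a) ^ (q - 1) ≤ ((-a) ^ q - (-b) ^ q) / (-a - -b) := this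
        _ = (-1 * (-a) ^ q - -1 * (-b) ^ q) / (a - b) := by
            rw [show -a - -b = -(a - b) by ring, div_neg]; ring_nf
    · -- a < 0 < b: |b| = b ≤ -a = |a|
      rw [abs_of_neg haneg, abs_of_pos hbpos, Real.sign_of_neg haneg, Real.sign_of_pos hbpos]
      rw [abs_of_neg haneg, abs_of_pos hbpos] at hab
      have := key2 hq0 hq1 hbpos hab
      calc q * (-a) ^ (q - 1) ≤ ((-a) ^ q + b ^ q) / (-a + b) := this
        _ = (-1 * (-a) ^ q - 1 * b ^ q) / (a - b) := by
            rw [show -a + b = -(a - b) by ring, div_neg]; ring_nf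
  · rcases hb.lt_or_gt with hbneg | hbpos
    · -- b < 0 < a
      rw [abs_of_pos hapos, abs_of_neg hbneg, Real.sign_of_pos hapos, Real.sign_of_neg hbneg]
      rw [abs_of_pos hapos, abs_of_neg hbneg] at hab
      have := key2 hq0 hq1 (by linarith : (0:ℝ) < -b) hab
      calc q * a ^ (q - 1) ≤ (a ^ q + (-b) ^ q) / (a + -b) := this
        _ = (1 * a ^ q - -1 * (-b) ^ q) / (a - b) := by ring_nf
    · -- both positive: b < a
      rw [abs_of_pos hapos, abs_of_pos hbpos, Real.sign_of_pos hapos, Real.sign_of_pos hbpos]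
      rw [abs_of_pos hapos, abs_of_pos hbpos] at hab
      have hba : b < a := lt_of_le_of_ne hab (fun h => hne h.symm)
      have := key1 hq0 hq1 hbpos hba
      simpa using this
end

section
/- Let m ≥ 2 and k be integers with 1 ≤ k ≤ m/2, and let X = {x ∈ S^m : 0 ⪯ x ⪯ I_m, Tr(x) = k}. If x ∈ S^m satisfies Tr(x) = 0, ‖λ(x)‖_∞ ≤ 1/2 and ‖λ(x)‖_1 ≤ k/2, then there exist x⁺, x⁻ ∈ X such that x = ½(x⁺ − x⁻). -/
open Matrix

lemma conj_mem_X (m k : ℕ) (U : Matrix.unitaryGroup (Fin m) ℝ) (d : Fin m → ℝ)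
    (h0 : ∀ i, 0 ≤ d i) (h1 : ∀ i, d i ≤ 1) (hsum : ∑ i, d i = (k : ℝ)) :
    ((U : Matrix (Fin m) (Fin m) ℝ) * diagonal d * star (U : Matrix (Fin m) (Fin m) ℝ)).IsHermitian ∧
    ((U : Matrix (Fin m) (Fin m) ℝ) * diagonal d * star (U : Matrix (Fin m) (Fin m) ℝ)).PosSemidef ∧
    ((1 : Matrix (Fin m) (Fin m) ℝ) - (U : Matrix (Fin m) (Fin m) ℝ) * diagonal d * star (U : Matrix (Fin m) (Fin m) ℝ)).PosSemidef ∧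
    ((U : Matrix (Fin m) (Fin m) ℝ) * diagonal d * star (U : Matrix (Fin m) (Fin m) ℝ)).trace = (k : ℝ) := by
  have hUU : (U : Matrix (Fin m) (Fin m) ℝ) * star (U : Matrix (Fin m) (Fin m) ℝ) = 1 :=
    (Matrix.mem_unitaryGroup_iff).mp U.2
  have hUU' : star (U : Matrix (Fin m) (Fin m) ℝ) * (U : Matrix (Fin m) (Fin m) ℝ) = 1 :=
    (Matrix.mem_unitaryGroup_iff').mp U.2
  have hpsd : ((U : Matrix (Fin m) (Fin m) ℝ) * diagonal d * star (U : Matrix (Fin m) (Fin m) ℝ)).PosSemidef := by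
    rw [Matrix.star_eq_conjTranspose]
    exact (Matrix.posSemidef_diagonal_iff.mpr h0).mul_mul_conjTranspose_same _
  refine ⟨hpsd.isHermitian, hpsd, ?_, ?_⟩
  · have key : (1 : Matrix (Fin m) (Fin m) ℝ) - (U : Matrix (Fin m) (Fin m) ℝ) * diagonal d * star (U : Matrix (Fin m) (Fin m) ℝ)
        = (U : Matrix (Fin m) (Fin m) ℝ) * diagonal (fun i => 1 - d i) * star (U : Matrix (Fin m) (Fin m) ℝ) := by
      have : diagonal (fun i => 1 - d i) = (1 : Matrix (Fin m) (Fin m) ℝ) - diagonal d := by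
        rw [← Matrix.diagonal_one, ← Matrix.diagonal_sub]
      rw [this, Matrix.mul_sub, Matrix.sub_mul, Matrix.mul_one, hUU]
    rw [key, Matrix.star_eq_conjTranspose]
    exact (Matrix.posSemidef_diagonal_iff.mpr (fun i => by linarith [h1 i])).mul_mul_conjTranspose_same _
  · rw [Matrix.trace_mul_cycle, hUU', Matrix.one_mul]
    rw [Matrix.trace_diagonal, hsum]

/-- Let `m ≥ 2`, `1 ≤ k ≤ m/2`, and
`X = {x ∈ S^m : 0 ⪯ x ⪯ I, Tr(x) = k}`. If a symmetric matrix `x` satisfies `Tr(x) = 0`,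
`‖λ(x)‖_∞ ≤ 1/2` and `‖λ(x)‖_1 ≤ k/2`, then `x = ½(x⁺ − x⁻)` for some `x⁺, x⁻ ∈ X`. -/
theorem stmt_18 (m k : ℕ) (hm : 2 ≤ m) (hk1 : 1 ≤ k) (hk2 : 2 * k ≤ m)
    (X : Set (Matrix (Fin m) (Fin m) ℝ))
    (hX : X = {x | x.IsHermitian ∧ x.PosSemidef ∧ ((1 : Matrix (Fin m) (Fin m) ℝ) - x).PosSemidef ∧
      x.trace = (k : ℝ)})
    (x : Matrix (Fin m) (Fin m) ℝ) (hx : x.IsHermitian)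
    (htr : x.trace = 0)
    (hinf : ∀ i, |hx.eigenvalues i| ≤ 1 / 2)
    (h1 : ∑ i, |hx.eigenvalues i| ≤ (k : ℝ) / 2) :
    ∃ xp ∈ X, ∃ xm ∈ X, x = (2⁻¹ : ℝ) • (xp - xm) := by
  set U := hx.eigenvectorUnitary with hU
  set l := hx.eigenvalues with hl
  set S := ∑ i, |l i| with hSdef
  have hS0 : 0 ≤ S := Finset.sum_nonneg fun i _ => abs_nonneg _
  have hkm : (k : ℝ) ≤ (m : ℝ) / 2 := by
    have : (2 * k : ℝ) ≤ m := by exact_mod_cast hk2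
    linarith
  have hk1' : (1 : ℝ) ≤ k := by exact_mod_cast hk1
  have hD : 0 < (m : ℝ) - 2 * S := by nlinarith
  set t := ((k : ℝ) - S) / ((m : ℝ) - 2 * S) with ht
  have ht0 : 0 ≤ t := div_nonneg (by linarith) hD.le
  have ht1 : t ≤ 1 := by
    rw [div_le_one hD]
    nlinarith
  have hsum0 : ∑ i, l i = 0 := by
    have hspec := hx.spectral_theorem
    have : x.trace = ∑ i, l i := by
      rw [hspec, Unitary.conjStarAlgAut_apply, Matrix.trace_mul_cycle,
        (Matrix.mem_unitaryGroup_iff').mp hx.eigenvectorUnitary.2, Matrix.one_mul,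
        Matrix.trace_diagonal]
      simp [Function.comp]
      rfl
    rw [htr] at this
    exact this.symm
  set c : Fin m → ℝ := fun i => t * (1 - 2 * |l i|) with hc
  have hc0 : ∀ i, 0 ≤ c i := fun i => mul_nonneg ht0 (by linarith [hinf i])
  set dp : Fin m → ℝ := fun i => 2 * max (l i) 0 + c i with hdp
  set dm : Fin m → ℝ := fun i => 2 * max (-l i) 0 + c i with hdm
  have hbounds : ∀ i, 0 ≤ dp i ∧ dp i ≤ 1 ∧ 0 ≤ dm i ∧ dm i ≤ 1 := by
    intro i
    have h1i := hinf i
    have hmax1 : max (l i) 0 ≤ |l i| := max_le (le_abs_self _) (abs_nonneg _)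
    have hmax2 : max (-l i) 0 ≤ |l i| := max_le (neg_le_abs _) (abs_nonneg _)
    have hub : 1 - 2 * |l i| ≥ 0 := by linarith
    have hcub : c i ≤ 1 - 2 * |l i| := by
      show t * (1 - 2 * |l i|) ≤ 1 - 2 * |l i|
      nlinarith
    refine ⟨?_, ?_, ?_, ?_⟩
    · have := le_max_right (l i) 0; have := hc0 i; simp only [hdp]; linarith
    · simp only [hdp]; linarith
    · have := le_max_right (-l i) 0; have := hc0 i; simp only [hdm]; linarith
    · simp only [hdm]; linarith
  have hcsum : ∑ i, c i = (k : ℝ) - S := by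
    have : ∑ i, c i = t * ((m : ℝ) - 2 * S) := by
      simp only [hc, ← Finset.mul_sum]
      congr 1
      rw [Finset.sum_sub_distrib, ← Finset.mul_sum, ← hSdef]
      simp [Finset.card_fin]
    rw [this, ht, div_mul_cancel₀ _ hD.ne']
  have habs : ∀ a : ℝ, 2 * max a 0 = a + |a| := by
    intro a
    rcases le_or_gt 0 a with h | h
    · rw [max_eq_left h, abs_of_nonneg h]; ring
    · rw [max_eq_right h.le, abs_of_neg h]; ring
  have hdpsum : ∑ i, dp i = (k : ℝ) := by
    simp only [hdp]
    rw [Finset.sum_add_distrib, hcsum]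
    have : ∑ i, 2 * max (l i) 0 = ∑ i, (l i + |l i|) := by
      exact Finset.sum_congr rfl fun i _ => habs (l i)
    rw [this, Finset.sum_add_distrib, hsum0, ← hSdef]
    ring
  have hdmsum : ∑ i, dm i = (k : ℝ) := by
    simp only [hdm]
    rw [Finset.sum_add_distrib, hcsum]
    have : ∑ i, 2 * max (-l i) 0 = ∑ i, (-l i + |l i|) := by
      refine Finset.sum_congr rfl fun i _ => ?_
      rw [habs (-l i), abs_neg]
    rw [this, Finset.sum_add_distrib]
    have hneg : ∑ i, -l i = -∑ i, l i := by rw [Finset.sum_neg_distrib]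
    rw [hneg, hsum0, ← hSdef]
    ring
  refine ⟨(U : Matrix (Fin m) (Fin m) ℝ) * diagonal dp * star (U : Matrix (Fin m) (Fin m) ℝ), ?_,
    (U : Matrix (Fin m) (Fin m) ℝ) * diagonal dm * star (U : Matrix (Fin m) (Fin m) ℝ), ?_, ?_⟩
  · rw [hX]
    exact conj_mem_X m k U dp (fun i => (hbounds i).1) (fun i => (hbounds i).2.1) hdpsum
  · rw [hX]
    exact conj_mem_X m k U dm (fun i => (hbounds i).2.2.1) (fun i => (hbounds i).2.2.2) hdmsum
  · have hspec := hx.spectral_theorem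
    have hddi : ∀ i, dp i - dm i = 2 * l i := by
      intro i
      have h1' := habs (l i)
      have h2' := habs (-l i)
      rw [abs_neg] at h2'
      simp only [hdp, hdm]
      linarith
    have hdd : diagonal dp - diagonal dm
        = (2 : ℝ) • diagonal (RCLike.ofReal ∘ hx.eigenvalues : Fin m → ℝ) := by
      ext i j
      rcases eq_or_ne i j with rfl | h
      · simp only [Matrix.sub_apply, Matrix.smul_apply, Matrix.diagonal_apply_eq,
          Function.comp_apply, smul_eq_mul]
        have := hddi i
        simpa using this
      · simp [Matrix.diagonal_apply_ne _ h]
    have key : (U : Matrix (Fin m) (Fin m) ℝ) * diagonal dp * star (U : Matrix (Fin m) (Fin m) ℝ)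
        - (U : Matrix (Fin m) (Fin m) ℝ) * diagonal dm * star (U : Matrix (Fin m) (Fin m) ℝ)
        = (2 : ℝ) • x := by
      rw [← Matrix.sub_mul, ← Matrix.mul_sub, hdd, Matrix.mul_smul, Matrix.smul_mul]
      exact congrArg (HSMul.hSMul (2 : ℝ)) hspec.symm
    rw [key, smul_smul]
    norm_num
end
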